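/- arXiv:1410.7031 — 6 statements merged into one kernel-verified Lean document; each statement's English description precedes it below -/
import Mathlib

section
/- Let p be an odd prime and R(X) = a₀X with a₀ ≠ 0. If a ∈ k*, c ∈ k, d ∈ F_p* and there exists g(X) ∈ k[X] with (aX+c)R(aX+c) − d·XR(X) = g(X)^p − g(X), then c = 0 and d = a². -/
open Polynomial

/-- For `R(X) = a₀X` (case `h = 0`): if `(aX+c)R(aX+c) − d·XR(X) = g(X)^p − g(X)`
for some polynomial `g`, with `a ∈ k*`, `c ∈ k`, `d ∈ F_p*`, then `c = 0` and `d = a²`. -/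
theorem S_XRX_case_h_zero (p : ℕ) [Fact p.Prime] (hodd : Odd p)
    (k : Type*) [Field k] [IsAlgClosed k] [CharP k p]
    (a₀ : k) (ha₀ : a₀ ≠ 0)
    (R : Polynomial k) (hR : R = Polynomial.C a₀ * Polynomial.X)
    (a c : k) (ha : a ≠ 0) (d : ZMod p) (hd : d ≠ 0)
    (g : Polynomial k)
    (hg : ((Polynomial.C a * Polynomial.X + Polynomial.C c) *
            R.comp (Polynomial.C a * Polynomial.X + Polynomial.C c)) -
          Polynomial.C (ZMod.castHom (dvd_refl p) k d) * (Polynomial.X * R) = g ^ p - g) :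
    c = 0 ∧ (ZMod.castHom (dvd_refl p) k d : k) = a ^ 2 := by
  subst hR
  set d' : k := (ZMod.castHom (dvd_refl p) k d : k) with hd'
  have hp3 : 3 ≤ p := by
    have h2 := Fact.out (p := p.Prime).two_le
    have := Nat.odd_iff.mp hodd
    omega
  have hE : C (a₀ * (a ^ 2 - d')) * X ^ 2 + C (2 * (a₀ * a * c)) * X + C (a₀ * c ^ 2)
      = g ^ p - g := by
    rw [← hg]
    simp only [mul_comp, add_comp, C_comp, X_comp, map_mul, map_sub, map_pow, map_ofNat]
    ring_nf
  -- g is constant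
  have hdeg : g.natDegree = 0 := by
    by_contra h
    have h1 : 1 ≤ g.natDegree := Nat.one_le_iff_ne_zero.mpr h
    have hlt : g.natDegree < (g ^ p).natDegree := by
      rw [natDegree_pow]
      calc g.natDegree = 1 * g.natDegree := (one_mul _).symm
        _ < p * g.natDegree := by
            apply Nat.mul_lt_mul_of_lt_of_le (by omega) le_rfl h1
    have h2 : (g ^ p - g).natDegree = p * g.natDegree := by
      rw [natDegree_sub_eq_left_of_natDegree_lt hlt, natDegree_pow]
    have h3 : (g ^ p - g).natDegree ≤ 2 := by
      rw [← hE]; exact natDegree_quadratic_le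
    rw [h2] at h3
    have : 3 ≤ p * g.natDegree := le_trans hp3 (Nat.le_mul_of_pos_right p h1)
    omega
  obtain ⟨b, rfl⟩ := natDegree_eq_zero.mp hdeg
  rw [← C_pow, ← C_sub] at hE
  have key : ∀ α β γ δ : k, C α * X ^ 2 + C β * X + C γ = C δ → α = 0 ∧ β = 0 := by
    intro α β γ δ h
    constructor
    · have := congrArg (fun q => Polynomial.coeff q 2) h
      simpa [coeff_add, coeff_C_mul, coeff_X_pow, coeff_C, coeff_X] using this
    · have := congrArg (fun q => Polynomial.coeff q 1) h
      simpa [coeff_add, coeff_C_mul, coeff_X_pow, coeff_C, coeff_X] using this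
  obtain ⟨hc2, hc1⟩ := key _ _ _ _ hE
  have hc2 : a₀ * (a ^ 2 - d') = 0 := hc2
  have hc1 : 2 * (a₀ * a * c) = 0 := hc1
  have h2ne : (2 : k) ≠ 0 := by
    intro h
    have : (p : ℕ) ∣ 2 := by
      have := (CharP.cast_eq_zero_iff k p 2).mp (by exact_mod_cast h)
      exact this
    have := Nat.le_of_dvd two_pos this
    omega
  constructor
  · rcases mul_eq_zero.mp hc1 with h | h
    · exact absurd h h2ne
    · rcases mul_eq_zero.mp h with h | h
      · exact absurd (mul_eq_zero.mp h) (by push_neg; exact ⟨ha₀, ha⟩)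
      · exact h
  · have := mul_eq_zero.mp hc2
    rcases this with h | h
    · exact absurd h ha₀
    · linear_combination -h
end

section
/- Let a₁X₁² + ⋯ + aₙXₙ² be a non-degenerate diagonal quadratic form over F_p (p odd, all aᵢ ≠ 0) with n odd. Then the number of zeros (x₁,…,xₙ) ∈ F_pⁿ of the form equals p^{n−1}. -/
open Finset

private lemma addChar_map_sum {p : ℕ} [NeZero p] {ι : Type*} (ψ : AddChar (ZMod p) ℂ)
    (s : Finset ι) (f : ι → ZMod p) : ψ (∑ i ∈ s, f i) = ∏ i ∈ s, ψ (f i) := by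
  classical
  induction s using Finset.induction with
  | empty => simp
  | @insert _ _ h ih => rw [Finset.sum_insert h, Finset.prod_insert h, AddChar.map_add_eq_mul, ih]

/-- Sum of `ψ (y² c)` expressed via the quadratic character. -/
private lemma sq_sum (p : ℕ) [Fact p.Prime] (hp2 : ringChar (ZMod p) ≠ 2)
    (ψ : AddChar (ZMod p) ℂ) (hψ : ψ.IsPrimitive) (c : ZMod p) :
    ∑ y : ZMod p, ψ (y ^ 2 * c) =
      (∑ u : ZMod p, ((quadraticChar (ZMod p) u : ℤ) : ℂ) * ψ (u * c)) +
        (if c = 0 then (p : ℂ) else 0) := by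
  classical
  have h1 : ∑ y : ZMod p, ψ (y ^ 2 * c)
      = ∑ u : ZMod p, ∑ y ∈ univ.filter (fun y : ZMod p => y ^ 2 = u), ψ (y ^ 2 * c) :=
    (Finset.sum_fiberwise univ (fun y : ZMod p => y ^ 2) (fun y => ψ (y ^ 2 * c))).symm
  rw [h1]
  have h2 : ∀ u : ZMod p, ∑ y ∈ univ.filter (fun y : ZMod p => y ^ 2 = u), ψ (y ^ 2 * c)
      = (((quadraticChar (ZMod p) u : ℤ) : ℂ) + 1) * ψ (u * c) := by
    intro u
    have : ∑ y ∈ univ.filter (fun y : ZMod p => y ^ 2 = u), ψ (y ^ 2 * c)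
        = ∑ _y ∈ univ.filter (fun y : ZMod p => y ^ 2 = u), ψ (u * c) := by
      apply Finset.sum_congr rfl
      intro y hy
      rw [Finset.mem_filter] at hy
      rw [hy.2]
    rw [this, Finset.sum_const, nsmul_eq_mul]
    congr 1
    have hc := quadraticChar_card_sqrts hp2 u
    rw [Set.toFinset_setOf] at hc
    exact_mod_cast congrArg (fun z : ℤ => (z : ℂ)) hc
  simp_rw [h2, add_mul, one_mul, Finset.sum_add_distrib]
  congr 1
  have := AddChar.sum_mulShift (R := ZMod p) (R' := ℂ) c hψ
  rw [this, apply_ite (Nat.cast : ℕ → ℂ), Nat.cast_zero, ZMod.card]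

/-- (Joly) For a non-degenerate diagonal quadratic form `∑ aᵢXᵢ²` over `F_p`, `p` odd,
in an odd number `n` of variables, the number of zeros in `F_pⁿ` is `p^{n−1}`. -/
theorem joly_odd_n (p : ℕ) [Fact p.Prime] (hodd : Odd p)
    (n : ℕ) (hn : Odd n) (a : Fin n → ZMod p) (ha : ∀ i, a i ≠ 0) :
    Nat.card {x : Fin n → ZMod p // ∑ i, a i * (x i) ^ 2 = 0} = p ^ (n - 1) := by
  classical
  haveI : NeZero p := ⟨(Fact.out : p.Prime).ne_zero⟩
  have hp2 : ringChar (ZMod p) ≠ 2 := by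
    rw [ZMod.ringChar_zmod_n]
    rintro rfl
    exact (Nat.not_odd_iff_even.mpr even_two) hodd
  -- notation
  set ψ : AddChar (ZMod p) ℂ := ZMod.stdAddChar with hψdef
  have hψ : ψ.IsPrimitive := ZMod.isPrimitive_stdAddChar p
  set χ : MulChar (ZMod p) ℂ :=
    (quadraticChar (ZMod p)).ringHomComp (Int.castRingHom ℂ) with hχdef
  have hχ_apply : ∀ u : ZMod p, χ u = ((quadraticChar (ZMod p) u : ℤ) : ℂ) := fun u => rfl
  have hχ0 : χ 0 = 0 := by rw [hχ_apply]; simp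
  have hχsum : ∑ u : ZMod p, χ u = 0 := by
    simp_rw [hχ_apply]
    rw [← Int.cast_sum]
    rw [quadraticChar_sum_zero hp2]
    simp
  have hχsq : ∀ t : ZMod p, t ≠ 0 → χ t * χ t = 1 := by
    intro t ht
    rw [hχ_apply, ← Int.cast_mul, ← sq, quadraticChar_sq_one ht]
    simp
  set G : ℂ := gaussSum χ ψ with hGdef
  set Q : (Fin n → ZMod p) → ZMod p := fun x => ∑ i, a i * (x i) ^ 2 with hQdef
  set N : ℕ := (univ.filter fun x : Fin n → ZMod p => Q x = 0).card with hNdef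
  -- the double sum, counted one way
  have lhs_eq : ∑ x : Fin n → ZMod p, ∑ t : ZMod p, ψ (t * Q x) = (N : ℂ) * (p : ℂ) := by
    have h1 : ∀ x : Fin n → ZMod p, ∑ t : ZMod p, ψ (t * Q x)
        = if Q x = 0 then (p : ℂ) else 0 := by
      intro x
      have := AddChar.sum_mulShift (R := ZMod p) (R' := ℂ) (Q x) hψ
      rw [this]
      norm_num
    simp_rw [h1]
    rw [Finset.sum_ite, Finset.sum_const, Finset.sum_const_zero, add_zero, nsmul_eq_mul]
  -- the inner sum over one variable, for t ≠ 0
  have hone : ∀ c : ZMod p, c ≠ 0 → ∑ y : ZMod p, ψ (y ^ 2 * c) = χ c * G := by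
    intro c hc
    have h0 := sq_sum p hp2 ψ hψ c
    rw [if_neg hc, add_zero] at h0
    have hgs : ∑ u : ZMod p, ((quadraticChar (ZMod p) u : ℤ) : ℂ) * ψ (u * c)
        = gaussSum χ (ψ.mulShift c) := by
      unfold gaussSum
      apply Finset.sum_congr rfl
      intro u _
      rw [AddChar.mulShift_apply, hχ_apply, mul_comm c u]
    have hu : IsUnit c := isUnit_iff_ne_zero.mpr hc
    have hms := gaussSum_mulShift χ ψ hu.unit
    have hcu : ((hu.unit : (ZMod p)ˣ) : ZMod p) = c := hu.unit_spec
    rw [hcu] at hms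
    have : gaussSum χ (ψ.mulShift c) = χ c * G := by
      calc gaussSum χ (ψ.mulShift c) = 1 * gaussSum χ (ψ.mulShift c) := (one_mul _).symm
        _ = (χ c * χ c) * gaussSum χ (ψ.mulShift c) := by rw [hχsq c hc]
        _ = χ c * (χ c * gaussSum χ (ψ.mulShift c)) := by ring
        _ = χ c * G := by rw [hms]
    rw [h0, hgs, this]
  -- the double sum, counted the other way
  have rhs_eq : ∑ t : ZMod p, ∑ x : Fin n → ZMod p, ψ (t * Q x) = (p : ℂ) ^ n := by
    have hsplit : ∀ t : ZMod p, ∑ x : Fin n → ZMod p, ψ (t * Q x)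
        = ∏ i : Fin n, ∑ y : ZMod p, ψ (y ^ 2 * (a i * t)) := by
      intro t
      have h1 : ∀ x : Fin n → ZMod p, ψ (t * Q x) = ∏ i : Fin n, ψ ((x i) ^ 2 * (a i * t)) := by
        intro x
        rw [hQdef]
        simp only
        rw [Finset.mul_sum, addChar_map_sum]
        apply Finset.prod_congr rfl
        intro i _
        ring_nf
      simp_rw [h1]
      rw [Finset.prod_univ_sum (fun _ : Fin n => (univ : Finset (ZMod p)))
        (fun i y => ψ (y ^ 2 * (a i * t)))]
      rw [Fintype.piFinset_univ]
    simp_rw [hsplit]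
    rw [← Finset.add_sum_erase _ _ (Finset.mem_univ (0 : ZMod p))]
    have hzero : ∏ i : Fin n, ∑ y : ZMod p, ψ (y ^ 2 * (a i * 0)) = (p : ℂ) ^ n := by
      have : ∀ i : Fin n, ∑ y : ZMod p, ψ (y ^ 2 * (a i * 0)) = (p : ℂ) := by
        intro i
        simp [ZMod.card]
      simp_rw [this]
      rw [Finset.prod_const, Finset.card_univ, Fintype.card_fin]
    have hrest : ∑ t ∈ univ.erase (0 : ZMod p),
        ∏ i : Fin n, ∑ y : ZMod p, ψ (y ^ 2 * (a i * t)) = 0 := by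
      have hterm : ∀ t ∈ univ.erase (0 : ZMod p),
          ∏ i : Fin n, ∑ y : ZMod p, ψ (y ^ 2 * (a i * t))
          = ((∏ i : Fin n, χ (a i)) * G ^ n) * χ t := by
        intro t ht
        have htne : t ≠ 0 := (Finset.mem_erase.mp ht).1
        have h1 : ∀ i : Fin n, ∑ y : ZMod p, ψ (y ^ 2 * (a i * t))
            = χ (a i) * χ t * G := by
          intro i
          rw [hone (a i * t) (mul_ne_zero (ha i) htne), map_mul]
        simp_rw [h1]
        rw [Finset.prod_mul_distrib, Finset.prod_mul_distrib, Finset.prod_const,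
          Finset.prod_const, Finset.card_univ, Fintype.card_fin]
        have hχtn : χ t ^ n = χ t := by
          obtain ⟨k, hk⟩ := hn
          rw [hk, pow_succ, pow_mul]
          rw [show χ t ^ 2 = 1 by rw [sq]; exact hχsq t htne]
          rw [one_pow, one_mul]
        rw [hχtn]
        ring
      rw [Finset.sum_congr rfl hterm, ← Finset.mul_sum]
      have : ∑ t ∈ univ.erase (0 : ZMod p), χ t = 0 := by
        rw [Finset.sum_erase _ hχ0, hχsum]
      rw [this, mul_zero]
    rw [hzero, hrest, add_zero]
  -- combine
  have key : (N : ℂ) * (p : ℂ) = (p : ℂ) ^ n := by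
    rw [← lhs_eq, Finset.sum_comm, rhs_eq]
  have hp0 : (p : ℂ) ≠ 0 := Nat.cast_ne_zero.mpr (Fact.out : p.Prime).ne_zero
  have hn1 : 1 ≤ n := hn.pos
  have key2 : (N : ℂ) = (p : ℂ) ^ (n - 1) := by
    have : (p : ℂ) ^ n = (p : ℂ) ^ (n - 1) * (p : ℂ) := by
      rw [← pow_succ, Nat.sub_add_cancel hn1]
    rw [this] at key
    exact mul_right_cancel₀ hp0 key
  have hNcast : N = p ^ (n - 1) := by
    have : ((p ^ (n - 1) : ℕ) : ℂ) = (p : ℂ) ^ (n - 1) := by push_cast; ring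
    exact_mod_cast key2.trans this.symm
  rw [Nat.card_eq_fintype_card, Fintype.card_subtype]
  exact hNcast
end

section
/- Let a₁X₁² + ⋯ + aₙXₙ² be a non-degenerate diagonal quadratic form over F_p (p odd) with n even. Then the number of its zeros in F_pⁿ is p^{n−1} + (p^{n/2} − p^{n/2−1}) if (−1)^{n/2}a₁⋯aₙ is a nonzero square in F_p, and p^{n−1} − (p^{n/2} − p^{n/2−1}) otherwise. -/
open Finset

variable {p : ℕ} [Fact p.Prime]

private lemma hchar (hodd : Odd p) : ringChar (ZMod p) ≠ 2 := by
  rw [ZMod.ringChar_zmod_n]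
  rintro rfl
  exact (Nat.not_odd_iff_even.mpr even_two) hodd

-- χ(b⁻¹) = χ(b)
private lemma chi_inv (b : ZMod p) (hb : b ≠ 0) :
    quadraticChar (ZMod p) b⁻¹ = quadraticChar (ZMod p) b := by
  have h1 : quadraticChar (ZMod p) b * quadraticChar (ZMod p) b⁻¹ = 1 := by
    rw [← map_mul, mul_inv_cancel₀ hb, map_one]
  rcases quadraticChar_dichotomy hb with h | h <;> rw [h] at h1 ⊢ <;> omega

-- count of square roots
private lemma count_sq (hodd : Odd p) (c : ZMod p) :
    (Nat.card {v : ZMod p // v ^ 2 = c} : ℤ) = quadraticChar (ZMod p) c + 1 := by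
  rw [Nat.card_eq_fintype_card, ← quadraticChar_card_sqrts (hchar hodd) c,
    Set.toFinset_card]
  rfl

private lemma count1 (hodd : Odd p) (b : ZMod p) (hb : b ≠ 0) (s : ZMod p) :
    (Nat.card {v : ZMod p // b * v ^ 2 = s} : ℤ)
      = quadraticChar (ZMod p) (b * s) + 1 := by
  have he : {v : ZMod p // b * v ^ 2 = s} ≃ {v : ZMod p // v ^ 2 = b⁻¹ * s} := by
    apply Equiv.subtypeEquivRight
    intro v
    constructor
    · rintro rfl; field_simp
    · intro h; rw [h]; field_simp
  rw [Nat.card_congr he, count_sq hodd (b⁻¹ * s), map_mul, chi_inv b hb, ← map_mul]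


private lemma jacobi_aux (hodd : Odd p) (t : ZMod p) :
    ∑ r : ZMod p, quadraticChar (ZMod p) r * quadraticChar (ZMod p) (t - r)
      = if t = 0 then (quadraticChar (ZMod p) (-1)) * (p - 1 : ℤ)
        else -(quadraticChar (ZMod p) (-1)) := by
  set χ := quadraticChar (ZMod p) with hχ
  rcases eq_or_ne t 0 with rfl | ht
  · simp only [if_pos rfl]
    have h1 : ∀ r : ZMod p, χ r * χ (0 - r) = χ (-1) * (if r = 0 then 0 else 1) := by
      intro r
      rcases eq_or_ne r 0 with rfl | hr
      · simp [hχ]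
      · have h2 : χ (-r) = χ (-1) * χ r := by rw [← map_mul]; ring_nf
        have h3 : χ r * χ r = 1 := by
          rw [← map_mul, ← sq]; exact quadraticChar_sq_one' hr
        rw [if_neg hr, zero_sub, h2]
        linear_combination χ (-1) * h3
    rw [Finset.sum_congr rfl fun r _ => h1 r, ← Finset.mul_sum]
    congr 1
    have h4 : ∀ i : ZMod p, (if i = 0 then (0:ℤ) else 1) = 1 - (if i = 0 then 1 else 0) := by
      intro i; split <;> ring
    rw [Finset.sum_congr rfl fun i _ => h4 i, Finset.sum_sub_distrib, Finset.sum_const,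
      Finset.card_univ, ZMod.card, Finset.sum_ite_eq' Finset.univ (0 : ZMod p) (fun _ => (1:ℤ)),
      if_pos (Finset.mem_univ _)]
    push_cast
    ring
  · rw [if_neg ht]
    have hq : χ ≠ 1 := quadraticChar_ne_one (hchar hodd)
    have hinv : χ⁻¹ = χ := (quadraticChar_isQuadratic (ZMod p)).inv
    have hj := jacobiSum_nontrivial_inv hq
    rw [hinv] at hj
    calc ∑ r : ZMod p, χ r * χ (t - r)
        = ∑ x : ZMod p, χ (t * x) * χ (t - t * x) := by
          exact (Fintype.sum_equiv (Equiv.mulLeft₀ t ht)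
            (fun x => χ (t * x) * χ (t - t * x)) (fun r => χ r * χ (t - r))
            (fun x => rfl)).symm
      _ = ∑ x : ZMod p, (χ t * χ t) * (χ x * χ (1 - x)) := by
          refine Finset.sum_congr rfl fun x _ => ?_
          rw [show t - t * x = t * (1 - x) by ring, map_mul, map_mul]
          ring
      _ = -χ (-1) := by
          have : χ t * χ t = 1 := by
            rw [← sq]; exact quadraticChar_sq_one ht
          rw [← Finset.mul_sum, this, one_mul]
          exact hj

private lemma card_pair (hodd : Odd p) (b c : ZMod p) (hb : b ≠ 0) (hc : c ≠ 0) (t : ZMod p) :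
    (Nat.card {uv : ZMod p × ZMod p // b * uv.1 ^ 2 + c * uv.2 ^ 2 = t} : ℤ)
      = p + quadraticChar (ZMod p) (-(b * c)) * (if t = 0 then (p - 1 : ℤ) else -1) := by
  set χ := quadraticChar (ZMod p) with hχ
  have e1 : {uv : ZMod p × ZMod p // b * uv.1 ^ 2 + c * uv.2 ^ 2 = t}
      ≃ Σ u : ZMod p, {v : ZMod p // c * v ^ 2 = t - b * u ^ 2} :=
    (Equiv.subtypeEquivRight (fun uv => by
      constructor
      · intro h; linear_combination h
      · intro h; linear_combination h)).trans
      (Equiv.subtypeProdEquivSigmaSubtype (fun u v => c * v ^ 2 = t - b * u ^ 2))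
  rw [Nat.card_congr e1, Nat.card_eq_fintype_card, Fintype.card_sigma]
  push_cast
  have hterm : ∀ u : ZMod p, (Fintype.card {v : ZMod p // c * v ^ 2 = t - b * u ^ 2} : ℤ)
      = χ (c * (t - b * u ^ 2)) + 1 := by
    intro u
    rw [← Nat.card_eq_fintype_card]
    exact count1 hodd c hc _
  rw [Finset.sum_congr rfl fun u _ => hterm u, Finset.sum_add_distrib, Finset.sum_const,
    Finset.card_univ, ZMod.card, nsmul_eq_mul, mul_one]
  have hS : ∑ u : ZMod p, χ (c * (t - b * u ^ 2))
      = ∑ s : ZMod p, (χ s + 1) * χ (c * (t - b * s)) := by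
    rw [← Finset.sum_fiberwise Finset.univ (fun u : ZMod p => u ^ 2)
      (fun u => χ (c * (t - b * u ^ 2)))]
    refine Finset.sum_congr rfl fun s _ => ?_
    have hfib : ∀ u ∈ Finset.univ.filter (fun u : ZMod p => u ^ 2 = s),
        χ (c * (t - b * u ^ 2)) = χ (c * (t - b * s)) := by
      intro u hu
      rw [(Finset.mem_filter.mp hu).2]
    rw [Finset.sum_congr rfl hfib, Finset.sum_const, nsmul_eq_mul]
    congr 1
    have : (Finset.univ.filter (fun u : ZMod p => u ^ 2 = s)).card
        = Nat.card {v : ZMod p // v ^ 2 = s} := by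
      rw [Nat.card_eq_fintype_card, Fintype.card_subtype]
    rw [this, count_sq hodd s]
  rw [hS]
  have hsplit : ∑ s : ZMod p, (χ s + 1) * χ (c * (t - b * s))
      = ∑ s : ZMod p, χ s * χ (c * (t - b * s)) + ∑ s : ZMod p, χ (c * (t - b * s)) := by
    rw [← Finset.sum_add_distrib]
    exact Finset.sum_congr rfl fun s _ => by ring
  have hzero : ∑ s : ZMod p, χ (c * (t - b * s)) = 0 := by
    have := Fintype.sum_equiv
      ((Equiv.mulLeft₀ b hb).trans ((Equiv.subLeft t).trans (Equiv.mulLeft₀ c hc)))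
      (fun s => χ (c * (t - b * s))) (fun r => χ r) (fun s => rfl)
    rw [this, hχ]
    exact quadraticChar_sum_zero (hchar hodd)
  have hmain : ∑ s : ZMod p, χ s * χ (c * (t - b * s))
      = χ b * χ c * ∑ r : ZMod p, χ r * χ (t - r) := by
    have e3 := Fintype.sum_equiv (Equiv.mulLeft₀ b⁻¹ (inv_ne_zero hb))
      (fun r => χ (b⁻¹ * r) * χ (c * (t - b * (b⁻¹ * r))))
      (fun s => χ s * χ (c * (t - b * s))) (fun r => rfl)
    rw [← e3]
    rw [Finset.mul_sum]
    refine Finset.sum_congr rfl fun r _ => ?_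
    show χ (b⁻¹ * r) * χ (c * (t - b * (b⁻¹ * r))) = χ b * χ c * (χ r * χ (t - r))
    rw [show b * (b⁻¹ * r) = r by field_simp, map_mul, map_mul, chi_inv b hb]
    ring
  rw [hsplit, hzero, hmain, jacobi_aux hodd t, add_zero]
  have hneg : χ (-(b * c)) = χ (-1) * (χ b * χ c) := by
    rw [show -(b * c) = -1 * (b * c) by ring, map_mul, map_mul]
  rw [hneg]
  split <;> ring


private def E (n : ℕ) (K : Type*) : ((Fin n → K) × (K × K)) ≃ (Fin (n + 2) → K) where
  toFun y := Fin.snoc (Fin.snoc y.1 y.2.1) y.2.2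
  invFun x := (fun i => x i.castSucc.castSucc,
    (x (Fin.last n).castSucc, x (Fin.last (n + 1))))
  left_inv y := by
    ext i
    · simp [Fin.snoc_castSucc, Fin.snoc_last]
    · simp [Fin.snoc_castSucc, Fin.snoc_last]
    · simp [Fin.snoc_castSucc, Fin.snoc_last]
  right_inv x := by
    funext i
    refine Fin.lastCases ?_ (fun j => ?_) i
    · simp [Fin.snoc_last]
    · refine Fin.lastCases ?_ (fun k => ?_) j
      · simp [Fin.snoc_castSucc, Fin.snoc_last]
      · simp [Fin.snoc_castSucc]

private lemma sum_E (n : ℕ) (a : Fin (n + 2) → ZMod p) (y : (Fin n → ZMod p) × (ZMod p × ZMod p)) :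
    ∑ i, a i * (E n (ZMod p) y i) ^ 2
      = (∑ i : Fin n, a i.castSucc.castSucc * (y.1 i) ^ 2)
        + (a (Fin.last n).castSucc * y.2.1 ^ 2 + a (Fin.last (n + 1)) * y.2.2 ^ 2) := by
  rw [Fin.sum_univ_castSucc (f := fun i => a i * (E n (ZMod p) y i) ^ 2)]
  rw [Fin.sum_univ_castSucc (f := fun i : Fin (n + 1) =>
    a i.castSucc * (E n (ZMod p) y i.castSucc) ^ 2)]
  simp only [E, Equiv.coe_fn_mk, Fin.snoc_castSucc, Fin.snoc_last]
  ring

private lemma step (hodd : Odd p) (n : ℕ) (a : Fin (n + 2) → ZMod p) (ha : ∀ i, a i ≠ 0) :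
    (Nat.card {x : Fin (n + 2) → ZMod p // ∑ i, a i * (x i) ^ 2 = 0} : ℤ)
      = p ^ (n + 1) + quadraticChar (ZMod p)
          (-(a (Fin.last n).castSucc * a (Fin.last (n + 1))))
        * ((Nat.card {z : Fin n → ZMod p //
            ∑ i : Fin n, a i.castSucc.castSucc * (z i) ^ 2 = 0} : ℤ) * p - p ^ n) := by
  classical
  set χ := quadraticChar (ZMod p) with hχ
  set Q : (Fin n → ZMod p) → ZMod p := fun z => ∑ i : Fin n, a i.castSucc.castSucc * (z i) ^ 2
    with hQ
  set b : ZMod p := a (Fin.last n).castSucc with hbdef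
  set c : ZMod p := a (Fin.last (n + 1)) with hcdef
  have hcompat : ∀ y : (Fin n → ZMod p) × (ZMod p × ZMod p),
      (b * y.2.1 ^ 2 + c * y.2.2 ^ 2 = -Q y.1) ↔ (∑ i, a i * (E n (ZMod p) y i) ^ 2 = 0) := by
    intro y
    rw [sum_E]
    constructor
    · intro h; linear_combination h
    · intro h; linear_combination h
  have e1 : {x : Fin (n + 2) → ZMod p // ∑ i, a i * (x i) ^ 2 = 0}
      ≃ Σ z : (Fin n → ZMod p), {uv : ZMod p × ZMod p // b * uv.1 ^ 2 + c * uv.2 ^ 2 = -Q z} :=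
    ((E n (ZMod p)).subtypeEquiv hcompat).symm.trans
      (Equiv.subtypeProdEquivSigmaSubtype
        (fun (z : Fin n → ZMod p) (uv : ZMod p × ZMod p) =>
          b * uv.1 ^ 2 + c * uv.2 ^ 2 = -Q z))
  rw [Nat.card_congr e1, Nat.card_eq_fintype_card, Fintype.card_sigma]
  push_cast
  have hterm : ∀ z : Fin n → ZMod p,
      (Fintype.card {uv : ZMod p × ZMod p // b * uv.1 ^ 2 + c * uv.2 ^ 2 = -Q z} : ℤ)
        = p + χ (-(b * c)) * (if Q z = 0 then (p - 1 : ℤ) else -1) := by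
    intro z
    rw [← Nat.card_eq_fintype_card, card_pair hodd b c (ha _) (ha _) (-Q z)]
    congr 2
    simp [neg_eq_zero]
  rw [Finset.sum_congr rfl fun z _ => hterm z, Finset.sum_add_distrib, Finset.sum_const,
    Finset.card_univ, Fintype.card_fun, ZMod.card, Fintype.card_fin, nsmul_eq_mul,
    ← Finset.mul_sum]
  have hite : ∀ z : Fin n → ZMod p, (if Q z = 0 then (p - 1 : ℤ) else -1)
      = p * (if Q z = 0 then 1 else 0) - 1 := by
    intro z; split <;> ring
  rw [Finset.sum_congr rfl fun z _ => hite z, Finset.sum_sub_distrib, Finset.sum_const,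
    Finset.card_univ, Fintype.card_fun, ZMod.card, Fintype.card_fin, ← Finset.mul_sum]
  have hcount : ∑ z : Fin n → ZMod p, (if Q z = 0 then (1 : ℤ) else 0)
      = (Nat.card {z : Fin n → ZMod p // Q z = 0} : ℤ) := by
    rw [Finset.sum_boole, Nat.card_eq_fintype_card, Fintype.card_subtype]
  rw [hcount]
  push_cast
  ring

private lemma key (hodd : Odd p) : ∀ (m : ℕ) (a : Fin (2 * m) → ZMod p), (∀ i, a i ≠ 0) →
    (Nat.card {x : Fin (2 * m) → ZMod p // ∑ i, a i * (x i) ^ 2 = 0} : ℤ) * p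
      = (p : ℤ) ^ (2 * m)
        + quadraticChar (ZMod p) ((-1) ^ m * ∏ i, a i) * ((p : ℤ) ^ (m + 1) - (p : ℤ) ^ m)
  | 0, a, ha => by
    have htriv : ∀ x : Fin (2 * 0) → ZMod p, ∑ i, a i * (x i) ^ 2 = 0 := fun x =>
      Finset.sum_eq_zero fun i _ => absurd i.is_lt (by omega)
    have h1 : Nat.card {x : Fin (2 * 0) → ZMod p // ∑ i, a i * (x i) ^ 2 = 0} = 1 := by
      rw [Nat.card_congr (Equiv.subtypeUnivEquiv htriv), Nat.card_eq_fintype_card,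
        Fintype.card_fun]
      norm_num
    rw [h1]
    haveI : IsEmpty (Fin (2 * 0)) := inferInstanceAs (IsEmpty (Fin 0))
    have h2 : (∏ i : Fin (2 * 0), a i) = 1 := Finset.prod_of_isEmpty _
    rw [h2]
    norm_num
  | (m + 1), a, ha => by
    show (Nat.card {x : Fin (2 * m + 2) → ZMod p //
        ∑ i : Fin (2 * m + 2), a i * (x i) ^ 2 = 0} : ℤ) * p
      = (p : ℤ) ^ (2 * m + 2)
        + quadraticChar (ZMod p) ((-1) ^ (m + 1) * ∏ i : Fin (2 * m + 2), a i)
          * ((p : ℤ) ^ (m + 2) - (p : ℤ) ^ (m + 1))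
    set χ := quadraticChar (ZMod p) with hχ
    have hst := step hodd (2 * m) a ha
    have ih := key hodd m (fun i => a i.castSucc.castSucc) (fun i => ha _)
    have hprod : (∏ i : Fin (2 * m + 2), a i)
        = (∏ i : Fin (2 * m), a i.castSucc.castSucc)
          * (a (Fin.last (2 * m)).castSucc * a (Fin.last (2 * m + 1))) := by
      rw [Fin.prod_univ_castSucc (f := fun i : Fin (2 * m + 2) => a i),
        Fin.prod_univ_castSucc (f := fun i : Fin (2 * m + 1) => a i.castSucc)]
      ring
    have hD : χ ((-1) ^ (m + 1) * ∏ i : Fin (2 * m + 2), a i)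
        = χ (-(a (Fin.last (2 * m)).castSucc * a (Fin.last (2 * m + 1))))
          * χ ((-1) ^ m * ∏ i : Fin (2 * m), a i.castSucc.castSucc) := by
      rw [← map_mul]
      congr 1
      rw [hprod]
      ring
    rw [hst, hD]
    linear_combination (χ (-(a (Fin.last (2 * m)).castSucc * a (Fin.last (2 * m + 1)))) * (p : ℤ)) * ih


/-- (Joly) For a non-degenerate diagonal quadratic form `∑ aᵢXᵢ²` over `F_p`, `p` odd,
in an even number `n` of variables, the number of zeros in `F_pⁿ` is
`p^{n−1} ± (p^{n/2} − p^{n/2−1})`, with sign according to whether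
`(−1)^{n/2}a₁⋯aₙ` is a (nonzero) square in `F_p`. -/
theorem joly_even_n (p : ℕ) [Fact p.Prime] (hodd : Odd p)
    (n : ℕ) (hn : Even n) (a : Fin n → ZMod p) (ha : ∀ i, a i ≠ 0) :
    Nat.card {x : Fin n → ZMod p // ∑ i, a i * (x i) ^ 2 = 0} =
      if IsSquare ((-1 : ZMod p) ^ (n / 2) * ∏ i, a i) then
        p ^ (n - 1) + (p ^ (n / 2) - p ^ (n / 2 - 1))
      else
        p ^ (n - 1) - (p ^ (n / 2) - p ^ (n / 2 - 1)) := by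
  obtain ⟨M, rfl⟩ : ∃ M, n = 2 * M := ⟨n / 2, (Nat.mul_div_cancel' hn.two_dvd).symm⟩
  rw [Nat.mul_div_cancel_left M (by norm_num : 0 < 2)]
  have hp1 : 1 ≤ p := (Fact.out : p.Prime).one_lt.le
  match M with
  | 0 =>
    have htriv : ∀ x : Fin (2 * 0) → ZMod p, ∑ i, a i * (x i) ^ 2 = 0 := fun x =>
      Finset.sum_eq_zero fun i _ => absurd i.is_lt (by omega)
    have h1 : Nat.card {x : Fin (2 * 0) → ZMod p // ∑ i, a i * (x i) ^ 2 = 0} = 1 := by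
      rw [Nat.card_congr (Equiv.subtypeUnivEquiv htriv), Nat.card_eq_fintype_card,
        Fintype.card_fun]
      norm_num
    haveI : IsEmpty (Fin (2 * 0)) := inferInstanceAs (IsEmpty (Fin 0))
    have h2 : (∏ i : Fin (2 * 0), a i) = 1 := Finset.prod_of_isEmpty _
    rw [h1, h2]
    norm_num
  | m + 1 =>
    set χ := quadraticChar (ZMod p) with hχ
    set D : ZMod p := (-1) ^ (m + 1) * ∏ i : Fin (2 * (m + 1)), a i with hDdef
    have hDne : D ≠ 0 := by
      apply mul_ne_zero
      · exact pow_ne_zero _ (neg_ne_zero.mpr one_ne_zero)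
      · exact Finset.prod_ne_zero_iff.mpr fun i _ => ha i
    have hkey := key hodd (m + 1) a ha
    have hpz : (p : ℤ) ≠ 0 := by exact_mod_cast Nat.Prime.ne_zero Fact.out
    have hle : p ^ m ≤ p ^ (m + 1) := Nat.pow_le_pow_right hp1 (Nat.le_succ m)
    have hchar2 : ringChar (ZMod p) ≠ 2 := hchar hodd
    by_cases hsq : IsSquare D
    · rw [if_pos hsq]
      have hchi : χ D = 1 := (quadraticChar_one_iff_isSquare hDne).mpr hsq
      have hNz : (Nat.card {x : Fin (2 * (m + 1)) → ZMod p // ∑ i, a i * (x i) ^ 2 = 0} : ℤ)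
          = (p : ℤ) ^ (2 * m + 1) + ((p : ℤ) ^ (m + 1) - (p : ℤ) ^ m) := by
        apply mul_right_cancel₀ hpz
        rw [hkey, hchi]
        ring
      have e1 : 2 * (m + 1) - 1 = 2 * m + 1 := rfl
      have e2 : m + 1 - 1 = m := rfl
      rw [e1, e2]
      zify [hle]
      exact hNz
    · rw [if_neg hsq]
      have hchi : χ D = -1 := quadraticChar_neg_one_iff_not_isSquare.mpr hsq
      have hNz : (Nat.card {x : Fin (2 * (m + 1)) → ZMod p // ∑ i, a i * (x i) ^ 2 = 0} : ℤ)
          = (p : ℤ) ^ (2 * m + 1) - ((p : ℤ) ^ (m + 1) - (p : ℤ) ^ m) := by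
        apply mul_right_cancel₀ hpz
        rw [hkey, hchi]
        ring
      have hexp : m + 1 ≤ 2 * m + 1 := Nat.succ_le_succ (Nat.le_mul_of_pos_left m two_pos)
      have hle2 : p ^ (m + 1) - p ^ m ≤ p ^ (2 * m + 1) :=
        le_trans (Nat.sub_le _ _) (Nat.pow_le_pow_right hp1 hexp)
      have e1 : 2 * (m + 1) - 1 = 2 * m + 1 := rfl
      have e2 : m + 1 - 1 = m := rfl
      rw [e1, e2]
      zify [hle, hle2]
      exact hNz
end

section
/- Let p be an odd prime, q a power of p, and e₁, e₂ ∈ F_q*. The curves D_{e₁}: Y^p − Y = e₁X² and D_{e₂}: Y^p − Y = e₂X² are related by an F_q-isomorphism of the form (x,y) ↦ (ν₀x, ν₂y + ν₃) fixing infinity if and only if e₁/e₂ is a product of a square in F_q* and an element of F_p*. -/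
open Polynomial in
lemma pow_p_eq_self_mem0 {p : ℕ} [Fact p.Prime] {K : Type*} [Field K] [Algebra (ZMod p) K]
    (x : K) (h : x ^ p = x) [DecidableEq K] : ∃ t : ZMod p, algebraMap (ZMod p) K t = x := by
  by_contra hc
  push_neg at hc
  have hp : p.Prime := Fact.out
  have hg : (X ^ p - X : K[X]) ≠ 0 := FiniteField.X_pow_card_sub_X_ne_zero K hp.one_lt
  have hinj : Function.Injective (algebraMap (ZMod p) K) := RingHom.injective _
  set T : Finset K := insert x (Finset.univ.image (algebraMap (ZMod p) K)) with hTdef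
  have hxT : x ∉ Finset.univ.image (algebraMap (ZMod p) K) := by
    simp only [Finset.mem_image, Finset.mem_univ, true_and]
    rintro ⟨t, ht⟩; exact hc t ht
  have hT : T.card = p + 1 := by
    rw [hTdef, Finset.card_insert_of_notMem hxT,
      Finset.card_image_of_injective _ hinj, Finset.card_univ, ZMod.card]
  have hsub : T ⊆ (X ^ p - X : K[X]).roots.toFinset := by
    intro a ha
    rw [Multiset.mem_toFinset, Polynomial.mem_roots hg]
    have : a ^ p = a := by
      rw [hTdef] at ha
      rcases Finset.mem_insert.mp ha with rfl | ha
      · exact h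
      · obtain ⟨t, -, rfl⟩ := Finset.mem_image.mp ha
        rw [← map_pow, ZMod.pow_card]
    simp [Polynomial.IsRoot, this]
  have h1 := Finset.card_le_card hsub
  have h2 := Multiset.toFinset_card_le (X ^ p - X : K[X]).roots
  have h3 := Polynomial.card_roots' (X ^ p - X : K[X])
  rw [FiniteField.X_pow_card_sub_X_natDegree_eq K hp.one_lt] at h3
  omega

lemma pow_p_eq_self_mem {p : ℕ} [Fact p.Prime] {K : Type*} [Field K] [Algebra (ZMod p) K]
    (x : K) (h : x ^ p = x) : ∃ t : ZMod p, algebraMap (ZMod p) K t = x := by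
  classical exact pow_p_eq_self_mem0 x h

open Polynomial in
set_option maxHeartbeats 1600000 in
/-- The curves `D_{e₁} : Y^p − Y = e₁X²` and `D_{e₂} : Y^p − Y = e₂X²` over `F_q`
are related by an `F_q`-isomorphism of the form `(x,y) ↦ (ν₀x, ν₂y + ν₃)` fixing
infinity if and only if `e₁/e₂` is the product of a square in `F_q*` with an
element of `F_p*`. -/
theorem De_isomorphic_iff (p : ℕ) [Fact p.Prime] (hodd : Odd p) (m : ℕ) (hm : 1 ≤ m)
    (e₁ e₂ : GaloisField p m) (he₁ : e₁ ≠ 0) (he₂ : e₂ ≠ 0) :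
    (∃ ν₀ ν₂ ν₃ : GaloisField p m, ν₀ ≠ 0 ∧ ν₂ ≠ 0 ∧
      ∀ x y : AlgebraicClosure (GaloisField p m),
        y ^ p - y = algebraMap (GaloisField p m) (AlgebraicClosure (GaloisField p m)) e₁ * x ^ 2 →
        (algebraMap (GaloisField p m) (AlgebraicClosure (GaloisField p m)) ν₂ * y +
            algebraMap (GaloisField p m) (AlgebraicClosure (GaloisField p m)) ν₃) ^ p -
          (algebraMap (GaloisField p m) (AlgebraicClosure (GaloisField p m)) ν₂ * y +
            algebraMap (GaloisField p m) (AlgebraicClosure (GaloisField p m)) ν₃) =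
        algebraMap (GaloisField p m) (AlgebraicClosure (GaloisField p m)) e₂ *
          (algebraMap (GaloisField p m) (AlgebraicClosure (GaloisField p m)) ν₀ * x) ^ 2)
    ↔ ∃ s : GaloisField p m, s ≠ 0 ∧ ∃ t : ZMod p, t ≠ 0 ∧
        e₁ / e₂ = s ^ 2 * algebraMap (ZMod p) (GaloisField p m) t := by
  set φ := algebraMap (GaloisField p m) (AlgebraicClosure (GaloisField p m)) with hφ
  have hp : p.Prime := Fact.out
  have hφinj : Function.Injective φ := RingHom.injective _
  haveI : CharP (AlgebraicClosure (GaloisField p m)) p := charP_of_injective_algebraMap hφinj p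
  haveI : ExpChar (AlgebraicClosure (GaloisField p m)) p := ExpChar.prime Fact.out
  have hφe₁ : φ e₁ ≠ 0 := (map_ne_zero φ).mpr he₁
  have hφe₂ : φ e₂ ≠ 0 := (map_ne_zero φ).mpr he₂
  constructor
  · rintro ⟨ν₀, ν₂, ν₃, h0, h2, hiso⟩
    have key : ∀ y : AlgebraicClosure (GaloisField p m),
        φ e₁ * ((φ ν₂) ^ p * y ^ p + (φ ν₃) ^ p - (φ ν₂ * y + φ ν₃)) =
        φ e₂ * (φ ν₀) ^ 2 * (y ^ p - y) := by
      intro y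
      obtain ⟨x, hx⟩ := IsAlgClosed.exists_pow_nat_eq ((y ^ p - y) / φ e₁) (n := 2) (by norm_num)
      have hxy : y ^ p - y = φ e₁ * x ^ 2 :=
        (((eq_div_iff hφe₁).mp hx).symm).trans (mul_comm _ _)
      have h := hiso x y hxy
      rw [add_pow_char _ _ _, mul_pow] at h
      calc φ e₁ * ((φ ν₂) ^ p * y ^ p + (φ ν₃) ^ p - (φ ν₂ * y + φ ν₃))
          = φ e₁ * (φ e₂ * (φ ν₀ * x) ^ 2) := by rw [← h]
        _ = φ e₂ * (φ ν₀) ^ 2 * (φ e₁ * x ^ 2) := by ring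
        _ = φ e₂ * (φ ν₀) ^ 2 * (y ^ p - y) := by rw [← hxy]
    have h3fix : (φ ν₃) ^ p = φ ν₃ := by
      have h := key 0
      rw [zero_pow hp.ne_zero, mul_zero, zero_add, sub_self, mul_zero] at h
      have h' : φ e₁ * ((φ ν₃) ^ p - φ ν₃) = φ e₁ * 0 := by linear_combination h
      have := mul_left_cancel₀ hφe₁ h'
      linear_combination this
    have h2fix : (φ ν₂) ^ p = φ ν₂ := by
      have h := key 1
      rw [one_pow, mul_one, sub_self, mul_zero, h3fix] at h
      have h' : φ e₁ * ((φ ν₂) ^ p - φ ν₂) = φ e₁ * 0 := by linear_combination h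
      have := mul_left_cancel₀ hφe₁ h'
      linear_combination this
    obtain ⟨y₀, hy₀⟩ := IsAlgClosed.exists_root
      (X ^ p - X - 1 : Polynomial (AlgebraicClosure (GaloisField p m)))
      (by
        have hdeg : (X ^ p - X - 1 :
            Polynomial (AlgebraicClosure (GaloisField p m))).natDegree = p := by
          compute_degree! <;> simp [hp.one_lt.ne, hp.ne_zero, hp.one_lt.le]
        intro hdeg0
        have hne : (X ^ p - X - 1 :
            Polynomial (AlgebraicClosure (GaloisField p m))) ≠ 0 := fun hz => by
          rw [hz] at hdeg; simp at hdeg; exact hp.ne_zero hdeg.symm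
        rw [Polynomial.degree_eq_natDegree hne, hdeg] at hdeg0
        exact hp.ne_zero (by exact_mod_cast hdeg0))
    have hy₀' : y₀ ^ p - y₀ = 1 := by
      have h := hy₀
      simp only [Polynomial.IsRoot, Polynomial.eval_sub, Polynomial.eval_pow,
        Polynomial.eval_X, Polynomial.eval_one] at h
      linear_combination h
    have keyc : φ e₁ * φ ν₂ = φ e₂ * (φ ν₀) ^ 2 := by
      have h := key y₀
      rw [h2fix, h3fix] at h
      have h' : φ e₁ * φ ν₂ * (y₀ ^ p - y₀) = φ e₂ * (φ ν₀) ^ 2 * (y₀ ^ p - y₀) := by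
        linear_combination h
      rw [hy₀'] at h'
      simpa using h'
    have hK : e₁ * ν₂ = e₂ * ν₀ ^ 2 := by
      apply hφinj
      rw [map_mul, map_mul, map_pow]
      exact keyc
    have h2K : ν₂ ^ p = ν₂ := by
      apply hφinj
      rw [map_pow]
      exact h2fix
    obtain ⟨t, ht⟩ := pow_p_eq_self_mem ν₂ h2K
    have ht0 : t ≠ 0 := by
      rintro rfl
      rw [map_zero] at ht
      exact h2 ht.symm
    refine ⟨ν₀, h0, t⁻¹, inv_ne_zero ht0, ?_⟩
    rw [map_inv₀, ht]
    field_simp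
    linear_combination hK
  · rintro ⟨s, hs, t, ht, heq⟩
    have ht' : algebraMap (ZMod p) (GaloisField p m) t ≠ 0 := (_root_.map_ne_zero _).mpr ht
    have he : e₁ = e₂ * s ^ 2 * algebraMap (ZMod p) (GaloisField p m) t := by
      rw [div_eq_iff he₂] at heq
      linear_combination heq
    refine ⟨s, (algebraMap (ZMod p) (GaloisField p m) t)⁻¹, 0, hs, inv_ne_zero ht', ?_⟩
    intro x y hxy
    have hν₂p : ((algebraMap (ZMod p) (GaloisField p m) t)⁻¹) ^ p =
        (algebraMap (ZMod p) (GaloisField p m) t)⁻¹ := by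
      rw [← map_inv₀, ← map_pow, ZMod.pow_card]
    have hfix : (φ (algebraMap (ZMod p) (GaloisField p m) t)⁻¹) ^ p =
        φ (algebraMap (ZMod p) (GaloisField p m) t)⁻¹ := by rw [← map_pow, hν₂p]
    have hmul : (algebraMap (ZMod p) (GaloisField p m) t)⁻¹ * e₁ = e₂ * s ^ 2 := by
      rw [he]; field_simp
    calc (φ (algebraMap (ZMod p) (GaloisField p m) t)⁻¹ * y + φ 0) ^ p -
          (φ (algebraMap (ZMod p) (GaloisField p m) t)⁻¹ * y + φ 0)
        = φ (algebraMap (ZMod p) (GaloisField p m) t)⁻¹ * (y ^ p - y) := by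
          rw [map_zero, add_zero, mul_pow, hfix]; ring
      _ = φ (algebraMap (ZMod p) (GaloisField p m) t)⁻¹ * (φ e₁ * x ^ 2) := by rw [hxy]
      _ = φ ((algebraMap (ZMod p) (GaloisField p m) t)⁻¹ * e₁) * x ^ 2 := by rw [map_mul]; ring
      _ = φ (e₂ * s ^ 2) * x ^ 2 := by rw [hmul]
      _ = φ e₂ * (φ s * x) ^ 2 := by rw [map_mul, map_pow]; ring
end

section
/- Let p ≡ 3 (mod 4) be a prime. Then every nonzero element z ∈ F_{p²} with Tr_{F_{p²}/F_p}(z) = 0 is a square in F_{p²}*, and consequently the number of F_{p²}-points on the affine curve Y^p − Y = X² with x ≠ 0 is (p−1)·2p; in total the projective curve has 1 + p² + (p−1)p points over F_{p²}. -/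
open Polynomial Finset

/-- For `p ≡ 3 (mod 4)`: every nonzero trace-zero element of `F_{p²}` is a square,
the number of affine `F_{p²}`-points of `Y^p − Y = X²` with `x ≠ 0` is `(p−1)·2p`, and
the projective curve has `1 + p² + (p−1)p` points over `F_{p²}`. -/
theorem point_count_p_three_mod_four (p : ℕ) [Fact p.Prime] (hp4 : p % 4 = 3) :
    (∀ z : GaloisField p 2, z ≠ 0 → z + z ^ p = 0 → IsSquare z) ∧
    Nat.card {w : GaloisField p 2 × GaloisField p 2 //
        w.2 ^ p - w.2 = w.1 ^ 2 ∧ w.1 ≠ 0} = (p - 1) * (2 * p) ∧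
    1 + Nat.card {w : GaloisField p 2 × GaloisField p 2 //
        w.2 ^ p - w.2 = w.1 ^ 2} = 1 + p ^ 2 + (p - 1) * p := by
  classical
  have hp : p.Prime := Fact.out
  have hp1 : 1 < p := hp.one_lt
  obtain ⟨k, hk⟩ : ∃ k, p = 2 * k + 1 := ⟨p / 2, by omega⟩
  haveI : Fintype (GaloisField p 2) := Fintype.ofFinite _
  have hcard : Fintype.card (GaloisField p 2) = p ^ 2 := by
    rw [← Nat.card_eq_fintype_card]; exact GaloisField.card p 2 (by norm_num)
  have hchar : ringChar (GaloisField p 2) = p := (ringChar.eq (GaloisField p 2) p)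
  have hchar2 : ringChar (GaloisField p 2) ≠ 2 := by rw [hchar]; omega
  have htwo : (2 : GaloisField p 2) ≠ 0 := Ring.two_ne_zero hchar2
  -- Part 1: nonzero trace-zero elements are squares
  have hsq : ∀ z : GaloisField p 2, z ≠ 0 → z + z ^ p = 0 → IsSquare z := by
    intro z hz h
    rw [FiniteField.isSquare_iff hchar2 hz]
    have hzp : z ^ p = -z := by linear_combination h
    have h1 : z ^ (p - 1) * z = (-1) * z := by
      rw [← pow_succ, Nat.sub_add_cancel hp1.le, hzp]; ring
    have h2 : z ^ (p - 1) = -1 := mul_right_cancel₀ hz h1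
    have hdiv : Fintype.card (GaloisField p 2) / 2 = (p - 1) * ((p + 1) / 2) := by
      rw [hcard]
      have h3 : p ^ 2 = 2 * ((2 * k) * (k + 1)) + 1 := by rw [hk]; ring
      have h4 : p - 1 = 2 * k := by omega
      have h5 : (p + 1) / 2 = k + 1 := by omega
      rw [h3, h4, h5]; omega
    rw [hdiv, pow_mul, h2]
    have heven : Even ((p + 1) / 2) := ⟨(p + 1) / 4, by omega⟩
    exact heven.neg_one_pow
  -- every value y^p - y has trace zero
  have htr : ∀ y : GaloisField p 2, (y ^ p - y) + (y ^ p - y) ^ p = 0 := by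
    intro y
    have : y ^ p ^ 2 = y := by rw [← hcard]; exact FiniteField.pow_card y
    rw [sub_pow_char]
    rw [← pow_mul, ← pow_two, this]
    ring
  -- description of solution sets of x^2 = y^p - y when nonzero
  have key2 : ∀ y : GaloisField p 2, y ^ p - y ≠ 0 →
      ∃ w : GaloisField p 2, w ≠ -w ∧ ∀ x : GaloisField p 2,
        (y ^ p - y = x ^ 2 ↔ (x = w ∨ x = -w)) := by
    intro y hy
    obtain ⟨w, hw⟩ := hsq _ hy (htr y)
    have hw2 : y ^ p - y = w ^ 2 := by rw [hw, sq]
    have hwne : w ≠ 0 := by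
      intro h0; apply hy; rw [hw2, h0]; ring
    refine ⟨w, ?_, ?_⟩
    · intro h
      have : 2 * w = 0 := by linear_combination h
      rcases mul_eq_zero.mp this with h | h
      exacts [htwo h, hwne h]
    · intro x
      rw [hw2, eq_comm, sq_eq_sq_iff_eq_or_eq_neg]
  -- count of fixed points of Frobenius
  have hroots : (univ.filter (fun y : GaloisField p 2 => y ^ p - y = 0)).card = p := by
    have hdeg : (X ^ p - X : (GaloisField p 2)[X]).natDegree = p := by
      rw [natDegree_sub_eq_left_of_natDegree_lt] <;>
        simp [natDegree_X_pow, natDegree_X, hp1]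
    have hne : (X ^ p - X : (GaloisField p 2)[X]) ≠ 0 := by
      intro h0
      rw [h0, natDegree_zero] at hdeg; omega
    apply le_antisymm
    · calc (univ.filter (fun y : GaloisField p 2 => y ^ p - y = 0)).card
          ≤ (X ^ p - X : (GaloisField p 2)[X]).roots.toFinset.card := by
            apply Finset.card_le_card
            intro y hy
            simp only [mem_filter, mem_univ, true_and] at hy
            rw [Multiset.mem_toFinset, mem_roots hne]
            simp [IsRoot, hy]
        _ ≤ Multiset.card (X ^ p - X : (GaloisField p 2)[X]).roots :=
            Multiset.toFinset_card_le _
        _ ≤ p := le_trans (card_roots' _) (le_of_eq hdeg)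
    · have := Finset.card_le_card_of_injOn (f := algebraMap (ZMod p) (GaloisField p 2))
        (s := (univ : Finset (ZMod p)))
        (t := univ.filter (fun y : GaloisField p 2 => y ^ p - y = 0))
        (fun a _ => by
          simp only [Finset.mem_coe, mem_filter, mem_univ, true_and]
          rw [← map_pow, ZMod.pow_card, sub_self])
        ((algebraMap (ZMod p) (GaloisField p 2)).injective.injOn)
      simpa [ZMod.card] using this
  have hcardnot : (univ.filter (fun y : GaloisField p 2 => ¬ y ^ p - y = 0)).card
      = p ^ 2 - p := by
    have := Finset.card_filter_add_card_filter_not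
      (s := (univ : Finset (GaloisField p 2)))
      (p := fun y : GaloisField p 2 => y ^ p - y = 0)
    rw [hroots, Finset.card_univ, hcard] at this
    omega
  have hsum : p ^ 2 = (p - 1) * p + p := by
    rw [Nat.sub_one_mul, pow_two]
    have : p ≤ p * p := Nat.le_mul_of_pos_left p hp.pos
    omega
  have h6 : (p - 1) * (2 * p) = (p - 1) * p + (p - 1) * p := by ring
  refine ⟨hsq, ?_, ?_⟩
  -- Part 2
  · rw [Nat.card_eq_fintype_card]
    have e1 : {w : GaloisField p 2 × GaloisField p 2 //
        w.2 ^ p - w.2 = w.1 ^ 2 ∧ w.1 ≠ 0} ≃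
        Σ y : GaloisField p 2, {x : GaloisField p 2 // y ^ p - y = x ^ 2 ∧ x ≠ 0} :=
      { toFun := fun w => ⟨w.1.2, w.1.1, w.2⟩
        invFun := fun s => ⟨(s.2.1, s.1), s.2.2⟩
        left_inv := fun w => rfl
        right_inv := fun s => rfl }
    rw [Fintype.card_congr e1, Fintype.card_sigma]
    have fib : ∀ y : GaloisField p 2,
        Fintype.card {x : GaloisField p 2 // y ^ p - y = x ^ 2 ∧ x ≠ 0} =
          if y ^ p - y = 0 then 0 else 2 := by
      intro y
      by_cases h0 : y ^ p - y = 0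
      · rw [if_pos h0, Fintype.card_eq_zero_iff]
        refine ⟨fun x => ?_⟩
        obtain ⟨x, hx1, hx2⟩ := x
        exact hx2 (pow_eq_zero_iff (n := 2) (by norm_num) |>.mp (by rw [← hx1, h0]))
      · rw [if_neg h0]
        obtain ⟨w, hwne, hw⟩ := key2 y h0
        have hw0 : w ≠ 0 := fun h => hwne (by rw [h, neg_zero])
        rw [Fintype.card_subtype]
        have hfil : univ.filter (fun x : GaloisField p 2 => y ^ p - y = x ^ 2 ∧ x ≠ 0)
            = {w, -w} := by
          ext x
          simp only [mem_filter, mem_univ, true_and, mem_insert, mem_singleton]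
          constructor
          · rintro ⟨h1, _⟩; exact (hw x).mp h1
          · rintro (h | h)
            · exact ⟨(hw x).mpr (Or.inl h), by rw [h]; exact hw0⟩
            · exact ⟨(hw x).mpr (Or.inr h), by rw [h]; exact neg_ne_zero.mpr hw0⟩
        rw [hfil, Finset.card_insert_of_notMem (by simpa using hwne),
          Finset.card_singleton]
    simp only [fib]
    rw [Finset.sum_ite, Finset.sum_const_zero, Finset.sum_const, zero_add, smul_eq_mul,
      hcardnot]
    omega
  -- Part 3
  · rw [Nat.card_eq_fintype_card]
    have e1 : {w : GaloisField p 2 × GaloisField p 2 //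
        w.2 ^ p - w.2 = w.1 ^ 2} ≃
        Σ y : GaloisField p 2, {x : GaloisField p 2 // y ^ p - y = x ^ 2} :=
      { toFun := fun w => ⟨w.1.2, w.1.1, w.2⟩
        invFun := fun s => ⟨(s.2.1, s.1), s.2.2⟩
        left_inv := fun w => rfl
        right_inv := fun s => rfl }
    rw [Fintype.card_congr e1, Fintype.card_sigma]
    have fib : ∀ y : GaloisField p 2,
        Fintype.card {x : GaloisField p 2 // y ^ p - y = x ^ 2} =
          if y ^ p - y = 0 then 1 else 2 := by
      intro y
      by_cases h0 : y ^ p - y = 0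
      · rw [if_pos h0, Fintype.card_subtype]
        have hfil : univ.filter (fun x : GaloisField p 2 => y ^ p - y = x ^ 2) = {0} := by
          ext x
          simp only [mem_filter, mem_univ, true_and, mem_singleton, h0]
          constructor
          · intro h1; exact (pow_eq_zero_iff (n := 2) (by norm_num)).mp h1.symm
          · rintro rfl; ring
        rw [hfil, Finset.card_singleton]
      · rw [if_neg h0]
        obtain ⟨w, hwne, hw⟩ := key2 y h0
        rw [Fintype.card_subtype]
        have hfil : univ.filter (fun x : GaloisField p 2 => y ^ p - y = x ^ 2)
            = {w, -w} := by
          ext x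
          simp only [mem_filter, mem_univ, true_and, mem_insert, mem_singleton]
          exact hw x
        rw [hfil, Finset.card_insert_of_notMem (by simpa using hwne),
          Finset.card_singleton]
    simp only [fib]
    rw [Finset.sum_ite, Finset.sum_const, Finset.sum_const, smul_eq_mul, smul_eq_mul,
      hcardnot, hroots]
    omega
end

section
/- Let p ≡ 1 (mod 4) be a prime. Then no nonzero element z ∈ F_{p²} with Tr_{F_{p²}/F_p}(z) = 0 is a square in F_{p²}*, and the smooth projective curve Y^p − Y = X² has exactly 1 + p² − (p−1)p points over F_{p²}. -/
open Polynomial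

private lemma aux_point_count (p : ℕ) [Fact p.Prime] (hp4 : p % 4 = 1)
    (K : Type) [Field K] [Fintype K] [Algebra (ZMod p) K]
    (hcard : Fintype.card K = p ^ 2) :
    (∀ z : K, z ≠ 0 → z + z ^ p = 0 → ¬ IsSquare z) ∧
    Nat.card {w : K × K // w.2 ^ p - w.2 = w.1 ^ 2} = p := by
  classical
  have hp : p.Prime := Fact.out
  have hp2 : 2 ≤ p := hp.two_le
  have hp5 : 5 ≤ p := by omega
  haveI : Fact (2 < p) := ⟨by omega⟩
  haveI : CharP K p := (Algebra.charP_iff (ZMod p) K p).mp inferInstance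
  obtain ⟨k, hk⟩ : ∃ k, p = 4 * k + 1 := ⟨p / 4, by omega⟩
  obtain ⟨s, hs⟩ : ∃ s, k * k = s := ⟨_, rfl⟩
  have hq : p ^ 2 = 16 * s + 8 * k + 1 := by rw [pow_two, hk, ← hs]; ring
  obtain ⟨q, hqq⟩ : ∃ q, p ^ 2 = q := ⟨_, rfl⟩
  rw [hqq] at hq
  -- Part 1
  have part1 : ∀ z : K, z ≠ 0 → z + z ^ p = 0 → ¬ IsSquare z := by
    intro z hz ht hsq
    obtain ⟨w, rfl⟩ := hsq
    have hw : w ≠ 0 := by rintro rfl; simp at hz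
    have hzp : (w * w) ^ (p - 1) = -1 := by
      have hpow : (w * w) ^ p = -(w * w) := eq_neg_of_add_eq_zero_right ht
      have h1 : (w * w) * (w * w) ^ (p - 1) = (w * w) * (-1) := by
        rw [mul_neg_one, ← hpow, ← pow_succ']
        congr 1
        omega
      exact mul_left_cancel₀ hz h1
    have hone : (w * w) ^ ((p ^ 2 - 1) / 2) = 1 := by
      have hw1 : w ^ (p ^ 2 - 1) = 1 := by
        have := FiniteField.pow_card_sub_one_eq_one w hw
        rwa [hcard] at this
      have h2 : 2 * ((p ^ 2 - 1) / 2) = p ^ 2 - 1 := by rw [hqq]; omega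
      calc (w * w) ^ ((p ^ 2 - 1) / 2) = w ^ (2 * ((p ^ 2 - 1) / 2)) := by
            rw [← sq, ← pow_mul]
        _ = w ^ (p ^ 2 - 1) := by rw [h2]
        _ = 1 := hw1
    have harith : (p - 1) * ((p + 1) / 2) = (p ^ 2 - 1) / 2 := by
      have e1 : p - 1 = 4 * k := by omega
      have e2 : (p + 1) / 2 = 2 * k + 1 := by omega
      have e3 : (p ^ 2 - 1) / 2 = 8 * s + 4 * k := by rw [hqq]; omega
      rw [e1, e2, e3, ← hs]; ring
    have hodd : Odd ((p + 1) / 2) := by rw [Nat.odd_iff]; omega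
    have hneg : (w * w) ^ ((p ^ 2 - 1) / 2) = -1 := by
      rw [← harith, pow_mul, hzp, hodd.neg_one_pow]
    have : (-1 : K) = 1 := by rw [← hneg, hone]
    exact CharP.neg_one_ne_one K p this
  refine ⟨part1, ?_⟩
  have hinj : Function.Injective (algebraMap (ZMod p) K) := (algebraMap (ZMod p) K).injective
  have hfix : ∀ y : K, y ^ p = y → ∃ a : ZMod p, algebraMap (ZMod p) K a = y := by
    intro y hy
    set F : Finset K := Finset.univ.filter (fun y => y ^ p = y) with hF
    have himg : Finset.univ.image (algebraMap (ZMod p) K) ⊆ F := by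
      intro x hx
      simp only [Finset.mem_image, Finset.mem_univ, true_and] at hx
      obtain ⟨a, rfl⟩ := hx
      simp only [hF, Finset.mem_filter, Finset.mem_univ, true_and]
      rw [← map_pow, ZMod.pow_card]
    have hcardimg : (Finset.univ.image (algebraMap (ZMod p) K)).card = p := by
      rw [Finset.card_image_of_injective _ hinj, Finset.card_univ, ZMod.card]
    have hFle : F.card ≤ p := by
      have hne : (X ^ p - X : K[X]) ≠ 0 :=
        FiniteField.X_pow_card_sub_X_ne_zero K hp.one_lt
      have hsub : F ⊆ (X ^ p - X : K[X]).roots.toFinset := by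
        intro x hx
        simp only [hF, Finset.mem_filter, Finset.mem_univ, true_and] at hx
        rw [Multiset.mem_toFinset, mem_roots hne]
        simp [IsRoot.def, sub_eq_zero, hx]
      calc F.card ≤ _ := Finset.card_le_card hsub
        _ ≤ Multiset.card (X ^ p - X : K[X]).roots := Multiset.toFinset_card_le _
        _ ≤ (X ^ p - X : K[X]).natDegree := card_roots' _
        _ = p := FiniteField.X_pow_card_sub_X_natDegree_eq K hp.one_lt
    have hEq : Finset.univ.image (algebraMap (ZMod p) K) = F :=
      Finset.eq_of_subset_of_card_le himg (by omega)
    have hyF : y ∈ F := by simp [hF, hy]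
    rw [← hEq] at hyF
    simpa using hyF
  have hycard : ∀ y : K, y ^ (p ^ 2) = y := by
    intro y
    rw [← hcard]
    exact FiniteField.pow_card y
  have e : ZMod p ≃ {w : K × K // w.2 ^ p - w.2 = w.1 ^ 2} := by
    refine Equiv.ofBijective
      (fun a => ⟨(0, algebraMap (ZMod p) K a), by
        simp only [← map_pow, ZMod.pow_card, sub_self]
        rw [zero_pow]
        omega⟩) ⟨?_, ?_⟩
    · intro a b hab
      apply hinj
      have := congrArg (fun s => s.1.2) hab
      simpa using this
    · rintro ⟨⟨x, y⟩, h⟩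
      simp only at h
      have hx : x = 0 := by
        by_contra hx
        refine part1 (x ^ 2) (pow_ne_zero _ hx) ?_ ⟨x, (sq x)⟩
        rw [← h, sub_pow_char]
        have hyp : (y ^ p) ^ p = y := by rw [← pow_mul, ← pow_two]; exact hycard y
        rw [hyp]
        ring
      subst hx
      have hy : y ^ p = y := by
        have h0 : y ^ p - y = 0 := by rw [h]; ring
        have := sub_eq_zero.mp h0
        exact this
      obtain ⟨a, ha⟩ := hfix y hy
      exact ⟨a, by simp [ha]⟩
  rw [← Nat.card_congr e, Nat.card_zmod]

/-- For `p ≡ 1 (mod 4)`: no nonzero trace-zero element of `F_{p²}` is a square, and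
the smooth projective curve `Y^p − Y = X²` has exactly `1 + p² − (p−1)p` points over
`F_{p²}`. -/
theorem point_count_p_one_mod_four (p : ℕ) [Fact p.Prime] (hp4 : p % 4 = 1) :
    (∀ z : GaloisField p 2, z ≠ 0 → z + z ^ p = 0 → ¬ IsSquare z) ∧
    1 + Nat.card {w : GaloisField p 2 × GaloisField p 2 //
        w.2 ^ p - w.2 = w.1 ^ 2} = 1 + p ^ 2 - (p - 1) * p := by
  have hp2 : 2 ≤ p := (Fact.out : p.Prime).two_le
  haveI : Fintype (GaloisField p 2) := Fintype.ofFinite _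
  obtain ⟨h1, h2⟩ := aux_point_count p hp4 (GaloisField p 2)
    (by rw [← Nat.card_eq_fintype_card]; exact GaloisField.card p 2 (by norm_num))
  refine ⟨h1, ?_⟩
  rw [h2]
  have hpp : p ^ 2 = p * p := pow_two p
  have hsub : (p - 1) * p = p * p - p := by rw [Nat.sub_mul, one_mul]
  have hle : p ≤ p * p := Nat.le_mul_of_pos_left p (by omega)
  omega
end
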